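/- If S is semisimple and satisfies condition Λ, then the J-classes multiply along the semilattice of ideal elements: for ideal elements α, β of S, J_α · J_β ⊆ J_{αβ}; concretely, if εxε = α and εyε = β then ε(xy)ε = αβ. -/

import Mathlib

/-- An `le`-semigroup: a semigroup with a lattice order compatible with
multiplication on both sides, possessing a greatest element `e`. -/
class LeSemigroup (S : Type*) extends Semigroup S, Lattice S where
  e : S
  le_e : ∀ x : S, x ≤ e
  mul_le_mul_left' : ∀ a b x : S, a ≤ b → x * a ≤ x * b
  mul_le_mul_right' : ∀ a b x : S, a ≤ b → a * x ≤ b * x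

namespace LeSemigroup

variable {S : Type*} [LeSemigroup S]

/-- `t x = exe ∨ xe ∨ ex ∨ x`, the ideal element generated by `x`. -/
def t (x : S) : S := e * x * e ⊔ x * e ⊔ e * x ⊔ x

/-- `x` is an ideal element. -/
def IsIdeal (x : S) : Prop := x * e ≤ x ∧ e * x ≤ x

/-- `x` is a left ideal element. -/
def IsLeftIdeal (x : S) : Prop := e * x ≤ x

end LeSemigroup

open LeSemigroup

instance {S : Type*} [LeSemigroup S] : CovariantClass S S (· * ·) (· ≤ ·) :=
  ⟨fun x a b h => LeSemigroup.mul_le_mul_left' a b x h⟩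

instance {S : Type*} [LeSemigroup S] :
    CovariantClass S S (Function.swap (· * ·)) (· ≤ ·) :=
  ⟨fun x a b h => LeSemigroup.mul_le_mul_right' a b x h⟩

theorem stmt17 {S : Type*} [LeSemigroup S]
    (hss : ∀ x : S, x ≤ e * x * e * x * e)
    (hΛ : ∀ a b : S, IsLeftIdeal a → IsLeftIdeal b → a * b = b * a)
    (α β x y : S) (hα : IsIdeal α) (hβ : IsIdeal β)
    (hx : e * x * e = α) (hy : e * y * e = β) :
    e * (x * y) * e = α * β := by
  subst hx; subst hy
  have he : ∀ z : S, z ≤ e := le_e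
  -- left ideal facts
  have hLx : IsLeftIdeal ((e : S) * x) := by
    show e * (e * x) ≤ e * x
    calc e * (e * x) = (e * e) * x := (mul_assoc _ _ _).symm
      _ ≤ e * x := _root_.mul_le_mul_left (he _) x
  have hLy : IsLeftIdeal ((e : S) * y * e) := by
    show e * (e * y * e) ≤ e * y * e
    calc e * (e * y * e) = (e * e) * y * e := by simp only [mul_assoc]
      _ ≤ e * y * e := by gcongr; exact he _
  -- α ≤ (e x) α
  have h1 : (e * x * e : S) ≤ e * x * (e * x * e) := by
    calc e * x * e ≤ e * (e * x * e * x * e) * e := by gcongr; exact hss x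
      _ = e * e * x * (e * x * (e * e)) := by simp only [mul_assoc]
      _ ≤ e * x * (e * x * e) := by gcongr <;> exact he _
  -- β ≤ β (y e)
  have h2 : (e * y * e : S) ≤ (e * y * e) * (y * e) := by
    calc e * y * e ≤ e * (e * y * e * y * e) * e := by gcongr; exact hss y
      _ = (e * e) * y * e * (y * (e * e)) := by simp only [mul_assoc]
      _ ≤ e * y * e * (y * e) := by gcongr <;> exact he _
  -- α β ≤ (e y)(e x)
  have h3 : (e * x * e) * (e * y * e) ≤ (e * y) * (e * x) := by
    calc (e * x * e) * (e * y * e) = (e * x) * ((e * e) * (y * e)) := by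
          simp only [mul_assoc]
      _ ≤ (e * x) * (e * (y * e)) := by gcongr; exact he _
      _ = (e * x) * (e * y * e) := by simp only [mul_assoc]
      _ = (e * y * e) * (e * x) := hΛ (e * x) (e * y * e) hLx hLy
      _ = (e * y) * ((e * e) * x) := by simp only [mul_assoc]
      _ ≤ (e * y) * (e * x) := by gcongr; exact he _
  apply le_antisymm
  · -- e (xy) e ≤ α β
    have hmid : y * (e * (y * (e * e))) ≤ e * y * e := by
      calc y * (e * (y * (e * e))) ≤ e * (e * (y * (e * e))) :=
            _root_.mul_le_mul_left (he y) _
        _ = (e * e) * (y * (e * e)) := (mul_assoc _ _ _).symm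
        _ ≤ e * (y * e) :=
            mul_le_mul' (he _) (_root_.mul_le_mul_right (he _) y)
        _ = e * y * e := (mul_assoc _ _ _).symm
    calc e * (x * y) * e ≤ e * (x * (e * y * e * y * e)) * e := by
          gcongr; exact hss y
      _ = (e * x * e) * (y * (e * (y * (e * e)))) := by simp only [mul_assoc]
      _ ≤ (e * x * e) * (e * y * e) := _root_.mul_le_mul_right hmid _
  · -- α β ≤ e (xy) e
    calc (e * x * e) * (e * y * e)
        ≤ (e * x * (e * x * e)) * ((e * y * e) * (y * e)) := mul_le_mul' h1 h2
      _ = (e * x) * ((e * x * e) * (e * y * e)) * (y * e) := by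
          simp only [mul_assoc]
      _ ≤ (e * x) * ((e * y) * (e * x)) * (y * e) := by gcongr
      _ = (e * (x * (e * (y * e)))) * (x * (y * e)) := by simp only [mul_assoc]
      _ ≤ e * (x * (y * e)) := _root_.mul_le_mul_left (he _) _
      _ = e * (x * y) * e := by simp only [mul_assoc]
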